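/- Under the assumptions 0 < α < 1, 1-α² < γ < 1, m, g, R, I₃ > 0, b > 0, β = 2mgR³αI₃γ²(γ+α²-1), and with g(z) = I₃(α²+(1-γ)²-2α(1-γ)z)/(2(γ+α²-1)), for all z* ∈ (-1,1), z₁ ∈ (-1,1), w ∈ (-1,1) with |(1-z₁²)/(1+w²+2wz₁)| ≤ 1, and ε = 2β/b², the quantity (2π√g(z*)/√(2mgRα))·√((1-z₁²)/(1+w²+2wz₁))·√ε is strictly less than T_max := 2πRI₃γ(α+1-γ)/b. -/

import Mathlib

theorem stmt_18 (m grav R I₃ α γ b zstar z₁ w : ℝ)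
    (hm : 0 < m) (hg : 0 < grav) (hR : 0 < R) (hI₃ : 0 < I₃)
    (hα : 0 < α) (hα1 : α < 1) (hγl : 1 - α^2 < γ) (hγu : γ < 1)
    (hb : 0 < b)
    (hzstar : zstar ∈ Set.Ioo (-1 : ℝ) 1)
    (hz₁ : z₁ ∈ Set.Ioo (-1 : ℝ) 1) (hw : w ∈ Set.Ioo (-1 : ℝ) 1)
    (hratio : |(1 - z₁^2)/(1 + w^2 + 2*w*z₁)| ≤ 1) :
    (2*Real.pi*Real.sqrt (I₃*(α^2 + (1-γ)^2 - 2*α*(1-γ)*zstar) / (2*(γ + α^2 - 1)))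
          / Real.sqrt (2*m*grav*R*α))
        * Real.sqrt ((1 - z₁^2)/(1 + w^2 + 2*w*z₁))
        * Real.sqrt (2*(2*m*grav*R^3*α*I₃*γ^2*(γ + α^2 - 1)) / b^2)
      < 2*Real.pi*R*I₃*γ*(α + 1 - γ) / b := by
  obtain ⟨hz1, hz2⟩ := hzstar
  have hD : 0 < γ + α^2 - 1 := by nlinarith
  have h1γ : 0 < 1 - γ := by linarith
  have hαγ : 0 < α + 1 - γ := by linarith
  have hγpos : 0 < γ := by nlinarith
  have hπ : 0 < Real.pi := Real.pi_pos
  set G := I₃*(α^2 + (1-γ)^2 - 2*α*(1-γ)*zstar) / (2*(γ + α^2 - 1)) with hGdef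
  set X := I₃*(α + 1 - γ)^2 / (2*(γ + α^2 - 1)) with hXdef
  set Y := 2*m*grav*R*α with hYdef
  set Z := 2*(2*m*grav*R^3*α*I₃*γ^2*(γ + α^2 - 1)) / b^2 with hZdef
  have hXpos : 0 < X := by rw [hXdef]; positivity
  have hYpos : 0 < Y := by rw [hYdef]; positivity
  have hZpos : 0 < Z := by rw [hZdef]; positivity
  have hGnonneg : 0 ≤ G := by
    rw [hGdef]
    have : 0 ≤ α^2 + (1-γ)^2 - 2*α*(1-γ)*zstar := by
      nlinarith [sq_nonneg (α - (1-γ)), mul_pos (mul_pos hα h1γ) (by linarith : (0:ℝ) < 1 - zstar)]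
    positivity
  have hGX : G < X := by
    rw [hGdef, hXdef, div_lt_div_iff₀ (by positivity) (by positivity)]
    nlinarith [mul_pos (mul_pos hI₃ hD) (mul_pos (mul_pos hα h1γ) (by linarith : (0:ℝ) < zstar + 1))]
  have hsqrtGX : Real.sqrt G < Real.sqrt X := Real.sqrt_lt_sqrt hGnonneg hGX
  have hratio1 : Real.sqrt ((1 - z₁^2)/(1 + w^2 + 2*w*z₁)) ≤ 1 :=
    Real.sqrt_le_one.mpr (le_of_abs_le hratio)
  have hYs : 0 < Real.sqrt Y := Real.sqrt_pos.mpr hYpos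
  have hZs : 0 < Real.sqrt Z := Real.sqrt_pos.mpr hZpos
  have hprod : Real.sqrt X * Real.sqrt Z / Real.sqrt Y = R*I₃*γ*(α + 1 - γ)/b := by
    rw [← Real.sqrt_mul hXpos.le, ← Real.sqrt_div (by positivity : (0:ℝ) ≤ X * Z)]
    have hsq : X * Z / Y = (R*I₃*γ*(α + 1 - γ)/b)^2 := by
      rw [hXdef, hYdef, hZdef]
      field_simp
    rw [hsq, Real.sqrt_sq (by positivity)]
  calc 2*Real.pi*Real.sqrt G / Real.sqrt Y * Real.sqrt ((1 - z₁^2)/(1 + w^2 + 2*w*z₁))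
        * Real.sqrt Z
      ≤ 2*Real.pi*Real.sqrt G / Real.sqrt Y * 1 * Real.sqrt Z := by
        gcongr
    _ < 2*Real.pi*Real.sqrt X / Real.sqrt Y * 1 * Real.sqrt Z := by gcongr
    _ = 2*Real.pi * (Real.sqrt X * Real.sqrt Z / Real.sqrt Y) := by ring
    _ = 2*Real.pi*R*I₃*γ*(α + 1 - γ) / b := by rw [hprod]; ring
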